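/- For positive real numbers a, b, c define C(a,b,c) := (1/2)(ab/c + bc/a + ca/b), μ(a,b,c) := a + b + c − C(a,b,c), and scal(a,b,c) := 4(a² + b² + c²) − 2(a²b²/c² + b²c²/a² + c²a²/b²). Let a, b, c, a', b', c' be positive real numbers with scal(a,b,c) > 0 and scal(a',b',c') > 0. If abc = a'b'c', scal(a,b,c) = scal(a',b',c'), and μ(a,b,c) = μ(a',b',c'), then the multiset {a, b, c} equals the multiset {a', b', c'}, i.e. (a',b',c') is a permutation of (a,b,c). -/

import Mathlib

/-- `C = (1/2)(ab/c + bc/a + ca/b)`. -/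
noncomputable def diracC (a b c : ℝ) : ℝ := (1/2) * (a*b/c + b*c/a + c*a/b)

/-- `μ = a + b + c - C`. -/
noncomputable def diracMu (a b c : ℝ) : ℝ := a + b + c - diracC a b c

/-- The scalar curvature of the metric `g_{abc}`. -/
noncomputable def diracScal (a b c : ℝ) : ℝ :=
  4*(a^2 + b^2 + c^2) - 2*(a^2*b^2/c^2 + b^2*c^2/a^2 + c^2*a^2/b^2)

open Polynomial in
lemma sym_multiset_eq (a b c a' b' c' : ℝ)
    (h1 : a+b+c = a'+b'+c')
    (h2 : a*b+b*c+c*a = a'*b'+b'*c'+c'*a')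
    (h3 : a*b*c = a'*b'*c') :
    ({a,b,c} : Multiset ℝ) = {a',b',c'} := by
  have key : ∀ x y z : ℝ, ({x,y,z} : Multiset ℝ) = ((X - C x)*(X - C y)*(X - C z)).roots := by
    intro x y z
    rw [roots_mul (mul_ne_zero (mul_ne_zero (X_sub_C_ne_zero x) (X_sub_C_ne_zero y)) (X_sub_C_ne_zero z)),
        roots_mul (mul_ne_zero (X_sub_C_ne_zero x) (X_sub_C_ne_zero y)),
        roots_X_sub_C, roots_X_sub_C, roots_X_sub_C]
    rfl
  rw [key, key]
  congr 1
  apply Polynomial.funext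
  intro x
  simp only [eval_mul, eval_sub, eval_X, eval_C]
  linear_combination (-(x^2))*h1 + x*h2 - h3

lemma decomp (a b c : ℝ) (ha : 0 < a) (hb : 0 < b) (hc : 0 < c) :
    ∃ p q r : ℝ, 0 < p ∧ 0 < q ∧ 0 < r ∧ a = r*p ∧ b = p*q ∧ c = q*r := by
  refine ⟨Real.sqrt (a*b/c), Real.sqrt (b*c/a), Real.sqrt (c*a/b),
    Real.sqrt_pos.mpr (by positivity), Real.sqrt_pos.mpr (by positivity),
    Real.sqrt_pos.mpr (by positivity), ?_, ?_, ?_⟩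
  · rw [← Real.sqrt_mul (by positivity)]
    rw [show c*a/b * (a*b/c) = a^2 by field_simp, Real.sqrt_sq ha.le]
  · rw [← Real.sqrt_mul (by positivity)]
    rw [show a*b/c * (b*c/a) = b^2 by field_simp, Real.sqrt_sq hb.le]
  · rw [← Real.sqrt_mul (by positivity)]
    rw [show b*c/a * (c*a/b) = c^2 by field_simp, Real.sqrt_sq hc.le]

lemma mu_eq (p q r : ℝ) (hp : 0 < p) (hq : 0 < q) (hr : 0 < r) :
    diracMu (r*p) (p*q) (q*r) = 2*(p*q+q*r+r*p) - (p+q+r)^2/2 := by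
  unfold diracMu diracC
  field_simp
  ring

lemma scal_eq (p q r : ℝ) (hp : 0 < p) (hq : 0 < q) (hr : 0 < r) :
    diracScal (r*p) (p*q) (q*r) =
      4*(2*(p*q+q*r+r*p) - (p+q+r)^2/2)*(p+q+r)^2 - 16*(p*q*r)*(p+q+r) := by
  unfold diracScal
  field_simp
  ring

theorem dirac_sphere_spectral_rigidity_pos_scal_S3 (a b c a' b' c' : ℝ)
    (ha : 0 < a) (hb : 0 < b) (hc : 0 < c)
    (ha' : 0 < a') (hb' : 0 < b') (hc' : 0 < c')
    (hscal : diracScal a b c > 0) (hscal' : diracScal a' b' c' > 0)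
    (hvol : a*b*c = a'*b'*c')
    (hs : diracScal a b c = diracScal a' b' c')
    (hm : diracMu a b c = diracMu a' b' c') :
    ({a, b, c} : Multiset ℝ) = ({a', b', c'} : Multiset ℝ) := by
  obtain ⟨p, q, r, hp, hq, hr, hA, hB, hC⟩ := decomp a b c ha hb hc
  obtain ⟨p', q', r', hp', hq', hr', hA', hB', hC'⟩ := decomp a' b' c' ha' hb' hc'
  subst hA hB hC hA' hB' hC'
  rw [mu_eq p q r hp hq hr, mu_eq p' q' r' hp' hq' hr'] at hm
  rw [scal_eq p q r hp hq hr] at hs hscal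
  rw [scal_eq p' q' r' hp' hq' hr'] at hs
  set s := p + q + r with hs_def
  set s' := p' + q' + r' with hs'_def
  set e2 := p*q + q*r + r*p with he2_def
  set e2' := p'*q' + q'*r' + r'*p' with he2'_def
  set t := p*q*r with ht_def
  set t' := p'*q'*r' with ht'_def
  have hspos : 0 < s := by positivity
  have hs'pos : 0 < s' := by positivity
  have htpos : 0 < t := by positivity
  have ht'pos : 0 < t' := by positivity
  -- volume gives t = t'
  have htt : t = t' := by
    have h2 : (t - t') * (t + t') = 0 := by
      rw [ht_def, ht'_def]; linear_combination hvol
    rcases mul_eq_zero.mp h2 with h | h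
    · linarith
    · linarith
  -- μ := 2*e2 - s^2/2 is positive
  set μ := 2*e2 - s^2/2 with hμ_def
  have hμpos : 0 < μ := by nlinarith [hscal, hspos, htpos]
  -- s = s'
  have hss : s = s' := by
    by_contra hne
    have hfac : (s - s') * (4*μ*(s+s') - 16*t) = 0 := by
      rw [hμ_def]
      linear_combination hs - 4*s'^2*hm + 16*s'*htt
    rcases mul_eq_zero.mp hfac with h | h
    · exact hne (by linarith)
    · -- 4μ(s+s') = 16t, so scal = -4μ s s' < 0
      have hneg : 4*μ*s^2 - 16*t*s = -(4*(μ*(s*s'))) := by linear_combination s*h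
      have hpos2 : 0 < 4*(μ*(s*s')) := by positivity
      linarith [hscal]
  have he2 : e2 = e2' := by
    rw [← hss] at hm
    linarith [hm]
  apply sym_multiset_eq
  · -- sums: a+b+c = e2 (after reorder)
    rw [he2_def, he2'_def] at he2
    linarith [he2]
  · -- pairwise products = t*s
    have : (r*p)*(p*q) + (p*q)*(q*r) + (q*r)*(r*p) = t*s := by rw [ht_def, hs_def]; ring
    have h' : (r'*p')*(p'*q') + (p'*q')*(q'*r') + (q'*r')*(r'*p') = t'*s' := by
      rw [ht'_def, hs'_def]; ring
    rw [this, h', htt, hss]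
  · exact hvol
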